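/- (Deterministic error bound.) Let A = UΣVᵀ be an SVD of A ∈ ℝ^{m×n}, partitioned with Σ₁ ∈ ℝ^{k×k} containing the top k singular values and Σ₂ the rest, and V = [V₁ V₂] correspondingly. Let Ω ∈ ℝ^{n×r} with r ≥ k, set Ω₁ = V₁ᵀΩ, Ω₂ = V₂ᵀΩ, Y = AΩ, and let P_Y be the orthogonal projection onto the range of Y. If Ω₁ has full row rank, then ‖(I − P_Y)A‖_F² ≤ ‖Σ₂‖_F² + ‖Σ₂ Ω₂ Ω₁†‖_F². -/

import Mathlib

open Matrix

noncomputable def frob {m n : ℕ} (A : Matrix (Fin m) (Fin n) ℝ) : ℝ :=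
  Real.sqrt (∑ i, ∑ j, (A i j) ^ 2)

def IsMoorePenrose {a b : ℕ} (A : Matrix (Fin a) (Fin b) ℝ)
    (B : Matrix (Fin b) (Fin a) ℝ) : Prop :=
  A * B * A = A ∧ B * A * B = B ∧ (A * B)ᵀ = A * B ∧ (B * A)ᵀ = B * A

lemma frob_sq_eq_trace {a b : ℕ} (A : Matrix (Fin a) (Fin b) ℝ) :
    frob A ^ 2 = Matrix.trace (A * Aᵀ) := by
  have h : 0 ≤ ∑ i, ∑ j, (A i j) ^ 2 := by positivity
  rw [frob, Real.sq_sqrt h]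
  simp [Matrix.trace, Matrix.mul_apply, Matrix.diag, sq]

lemma trace_sq_nonneg {a b : ℕ} (A : Matrix (Fin a) (Fin b) ℝ) :
    0 ≤ Matrix.trace (A * Aᵀ) := by
  rw [← frob_sq_eq_trace]; positivity

lemma sum_ite_ite {N : ℕ} (x y : Fin N) :
    ∑ i : Fin N, (if i = x then (1:ℝ) else 0) * (if i = y then 1 else 0)
      = if x = y then 1 else 0 := by
  rw [Finset.sum_eq_single x]
  · simp [eq_comm]
  · intro b _ hb; simp [hb]
  · simp

lemma frob_proj_le {a b : ℕ} (P : Matrix (Fin a) (Fin a) ℝ)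
    (hPsymm : Pᵀ = P) (hPidem : P * P = P) (N : Matrix (Fin a) (Fin b) ℝ) :
    frob ((1 - P) * N) ^ 2 ≤ frob N ^ 2 := by
  have hQ : (1 - P) * (1 - P) = 1 - P := by
    simp [Matrix.mul_sub, Matrix.sub_mul, hPidem]
  have key : frob N ^ 2 = frob (P * N) ^ 2 + frob ((1 - P) * N) ^ 2 := by
    rw [frob_sq_eq_trace, frob_sq_eq_trace, frob_sq_eq_trace]
    rw [Matrix.transpose_mul, Matrix.transpose_mul, hPsymm]
    have h1 : (1 - P)ᵀ = 1 - P := by simp [Matrix.transpose_sub, hPsymm]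
    rw [h1]
    have e1 : P * N * (Nᵀ * P) = P * (N * Nᵀ) * P := by
      simp [Matrix.mul_assoc]
    have e2 : (1 - P) * N * (Nᵀ * (1 - P)) = (1 - P) * (N * Nᵀ) * (1 - P) := by
      simp [Matrix.mul_assoc]
    rw [e1, e2, Matrix.trace_mul_cycle, Matrix.trace_mul_cycle (1-P) (N*Nᵀ) (1-P),
      hPidem, hQ,
      ← Matrix.trace_add, ← Matrix.add_mul]
    have : P + (1 - P) = 1 := by abel
    rw [this, Matrix.one_mul]
  have := frob_sq_eq_trace (P * N)
  nlinarith [frob_sq_eq_trace (P * N), trace_sq_nonneg (P * N),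
    Matrix.transpose_mul P N, sq_nonneg (frob (P * N))]

lemma frob_left_orth {a b c : ℕ} (U : Matrix (Fin a) (Fin b) ℝ) (hU : Uᵀ * U = 1)
    (N : Matrix (Fin b) (Fin c) ℝ) : frob (U * N) ^ 2 = frob N ^ 2 := by
  rw [frob_sq_eq_trace, frob_sq_eq_trace, Matrix.transpose_mul]
  rw [show U * N * (Nᵀ * Uᵀ) = U * (N * Nᵀ) * Uᵀ by simp [Matrix.mul_assoc],
    Matrix.trace_mul_cycle, ← Matrix.mul_assoc, hU, Matrix.one_mul]

lemma frob_right_orth {a b c : ℕ} (Q : Matrix (Fin b) (Fin c) ℝ) (hQ : Q * Qᵀ = 1)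
    (N : Matrix (Fin a) (Fin b) ℝ) : frob (N * Q) ^ 2 = frob N ^ 2 := by
  rw [frob_sq_eq_trace, frob_sq_eq_trace, Matrix.transpose_mul]
  rw [show N * Q * (Qᵀ * Nᵀ) = N * (Q * Qᵀ) * Nᵀ by simp [Matrix.mul_assoc], hQ,
    Matrix.mul_one]

lemma right_inv_of_full_rank {k r : ℕ} (A : Matrix (Fin k) (Fin r) ℝ) (B : Matrix (Fin r) (Fin k) ℝ)
    (h1 : A * B * A = A) (hr : A.rank = k) : A * B = 1 := by
  have hsurj : Function.Surjective A.mulVecLin := by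
    rw [← LinearMap.range_eq_top]
    apply Submodule.eq_top_of_finrank_eq
    rw [← Matrix.rank, hr]
    simp
  ext i j
  obtain ⟨x, hx⟩ := hsurj (Pi.single j 1)
  simp only [Matrix.mulVecLin_apply] at hx
  have : (A * B) *ᵥ Pi.single j 1 = Pi.single j 1 := by
    rw [← hx, Matrix.mulVec_mulVec, h1]
  have h2 := congrFun this i
  simp only [Matrix.mulVec_single_one, Matrix.col_apply] at h2
  rw [h2]
  simp [Matrix.one_apply, Pi.single_apply, eq_comm]

lemma sum_ite_ite' {N : ℕ} (x y : Fin N) :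
    ∑ i : Fin N, (if x = i then (1:ℝ) else 0) * (if y = i then 1 else 0)
      = if x = y then 1 else 0 := by
  rw [Finset.sum_eq_single x]
  · simp [eq_comm]
  · intro b _ hb; simp [Ne.symm hb]
  · simp

theorem deterministic_error_bound (m n k r : ℕ) (hk : k ≤ n) (hkr : k ≤ r)
    (A : Matrix (Fin m) (Fin n) ℝ)
    (U : Matrix (Fin m) (Fin n) ℝ) (V : Matrix (Fin n) (Fin n) ℝ)
    (σ : Fin n → ℝ)
    (hU : Uᵀ * U = 1) (hV : Vᵀ * V = 1)
    (hσpos : ∀ j, 0 ≤ σ j) (hσmono : Antitone σ)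
    (hSVD : A = U * Matrix.diagonal σ * Vᵀ)
    (Ω : Matrix (Fin n) (Fin r) ℝ)
    -- the partition V = [V₁ V₂]
    (V₁ : Matrix (Fin n) (Fin k) ℝ) (V₂ : Matrix (Fin n) (Fin (n - k)) ℝ)
    (hV₁ : V₁ = V.submatrix id (Fin.castLE hk))
    (hV₂ : V₂ = V.submatrix id (fun j : Fin (n - k) =>
      (⟨k + j.1, by omega⟩ : Fin n)))
    (S₂ : Matrix (Fin (n - k)) (Fin (n - k)) ℝ)
    (hS₂ : S₂ = Matrix.diagonal (fun j : Fin (n - k) => σ ⟨k + j.1, by omega⟩))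
    (Ω₁ : Matrix (Fin k) (Fin r) ℝ) (hΩ₁ : Ω₁ = V₁ᵀ * Ω)
    (Ω₂ : Matrix (Fin (n - k)) (Fin r) ℝ) (hΩ₂ : Ω₂ = V₂ᵀ * Ω)
    (hrank : Ω₁.rank = k)
    (Ω₁pinv : Matrix (Fin r) (Fin k) ℝ) (hpinv : IsMoorePenrose Ω₁ Ω₁pinv)
    (Y : Matrix (Fin m) (Fin r) ℝ) (hY : Y = A * Ω)
    -- P is the orthogonal projection onto the range of Y
    (P : Matrix (Fin m) (Fin m) ℝ) (hPsymm : Pᵀ = P) (hPidem : P * P = P)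
    (hPY : P * Y = Y) (hPrange : ∃ Z : Matrix (Fin r) (Fin m) ℝ, P = Y * Z) :
    frob ((1 - P) * A) ^ 2 ≤ frob S₂ ^ 2 + frob (S₂ * Ω₂ * Ω₁pinv) ^ 2 := by
  classical
  -- the two index embeddings
  set e₁ : Fin k → Fin n := Fin.castLE hk with he₁def
  set e₂ : Fin (n - k) → Fin n := fun j => (⟨k + j.1, by omega⟩ : Fin n) with he₂def
  have he₁inj : Function.Injective e₁ := Fin.castLE_injective hk
  have he₂inj : Function.Injective e₂ := by
    intro a b h
    have := congrArg Fin.val h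
    simp only [he₂def] at this
    exact Fin.ext (by omega)
  have he₁val : ∀ a, (e₁ a : ℕ) = a := fun a => rfl
  have he₂val : ∀ b, (e₂ b : ℕ) = k + b := fun b => rfl
  -- the inclusion matrices
  set E₁ : Matrix (Fin n) (Fin k) ℝ := fun i a => if i = e₁ a then 1 else 0 with hE₁def
  set E₂ : Matrix (Fin n) (Fin (n-k)) ℝ := fun i b => if i = e₂ b then 1 else 0 with hE₂def
  have he11 : E₁ᵀ * E₁ = 1 := by
    ext a b
    rw [Matrix.mul_apply]
    simp only [Matrix.transpose_apply]
    simp only [hE₁def]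
    rw [sum_ite_ite]
    simp [Matrix.one_apply, he₁inj.eq_iff]
  have he22 : E₂ᵀ * E₂ = 1 := by
    ext a b
    rw [Matrix.mul_apply]
    simp only [Matrix.transpose_apply]
    simp only [hE₂def]
    rw [sum_ite_ite]
    simp [Matrix.one_apply, he₂inj.eq_iff]
  have hne : ∀ a b, e₁ a ≠ e₂ b := by
    intro a b h
    have := congrArg Fin.val h
    rw [he₁val, he₂val] at this
    omega
  have he12 : E₁ᵀ * E₂ = 0 := by
    ext a b
    rw [Matrix.mul_apply]
    simp only [Matrix.transpose_apply]
    simp only [hE₁def, hE₂def]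
    rw [sum_ite_ite]
    simp [hne a b]
  -- bijection
  have hbij : Function.Bijective (Sum.elim e₁ e₂) := by
    rw [Fintype.bijective_iff_injective_and_card]
    constructor
    · rintro (a|a) (b|b) h
      · exact congrArg Sum.inl (he₁inj h)
      · exact absurd h (hne a b)
      · exact absurd h.symm (hne b a)
      · exact congrArg Sum.inr (he₂inj h)
    · simp; omega
  have hsplit : ∀ f : Fin n → ℝ, ∑ i, f i = ∑ a, f (e₁ a) + ∑ b, f (e₂ b) := by
    intro f
    rw [← Fintype.sum_bijective _ hbij (fun s => f (Sum.elim e₁ e₂ s)) f (fun s => rfl)]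
    rw [Fintype.sum_sum_type]
    rfl
  have hcomplete : E₁ * E₁ᵀ + E₂ * E₂ᵀ = 1 := by
    ext i j
    simp only [Matrix.add_apply, Matrix.mul_apply, Matrix.transpose_apply]
    simp only [hE₁def, hE₂def]
    have h := hsplit (fun x => (if i = x then (1:ℝ) else 0) * (if j = x then 1 else 0))
    rw [← h, sum_ite_ite']
    simp [Matrix.one_apply]
  -- basic identities
  have he21 : E₂ᵀ * E₁ = 0 := by
    have := congrArg Matrix.transpose he12
    simpa [Matrix.transpose_mul] using this
  have hΩ₁Ω₁pinv : Ω₁ * Ω₁pinv = 1 := right_inv_of_full_rank _ _ hpinv.1 hrank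
  have hVVt : V * Vᵀ = 1 := mul_eq_one_comm.mp hV
  have hV1E : V₁ = V * E₁ := by
    rw [hV₁]
    ext i a
    rw [Matrix.mul_apply]
    simp [hE₁def, mul_ite]
  have hV2E : V₂ = V * E₂ := by
    rw [hV₂]
    ext i b
    rw [Matrix.mul_apply]
    simp [hE₂def, mul_ite]
  have hΩ₁E : Ω₁ = E₁ᵀ * (Vᵀ * Ω) := by
    rw [hΩ₁, hV1E, Matrix.transpose_mul, Matrix.mul_assoc]
  have hΩ₂E : Ω₂ = E₂ᵀ * (Vᵀ * Ω) := by
    rw [hΩ₂, hV2E, Matrix.transpose_mul, Matrix.mul_assoc]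
  have hVtΩ : Vᵀ * Ω = E₁ * Ω₁ + E₂ * Ω₂ := by
    have h2 : E₁ * Ω₁ + E₂ * Ω₂ = (E₁ * E₁ᵀ + E₂ * E₂ᵀ) * (Vᵀ * Ω) := by
      rw [hΩ₁E, hΩ₂E, Matrix.add_mul, Matrix.mul_assoc, Matrix.mul_assoc]
    rw [h2, hcomplete, Matrix.one_mul]
  set F : Matrix (Fin (n-k)) (Fin k) ℝ := Ω₂ * Ω₁pinv with hFdef
  have hG : (Vᵀ * Ω) * Ω₁pinv = E₁ + E₂ * F := by
    rw [hVtΩ, Matrix.add_mul, Matrix.mul_assoc, Matrix.mul_assoc, hΩ₁Ω₁pinv,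
      Matrix.mul_one, hFdef]
  -- the comparison matrix
  set Sg : Matrix (Fin n) (Fin n) ℝ := Matrix.diagonal σ with hSgdef
  set K : Matrix (Fin n) (Fin n) ℝ := 1 - (E₁ + E₂ * F) * E₁ᵀ with hKdef
  set X : Matrix (Fin r) (Fin n) ℝ := Ω₁pinv * (E₁ᵀ * Vᵀ) with hXdef
  have hQ0 : (1 - P) * Y = 0 := by
    rw [Matrix.sub_mul, Matrix.one_mul, hPY, sub_self]
  have hPA : (1 - P) * A = (1 - P) * (A - Y * X) := by
    rw [Matrix.mul_sub, ← Matrix.mul_assoc, hQ0, Matrix.zero_mul, sub_zero]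
  have hYX : Y * X = U * (Sg * ((E₁ + E₂ * F) * E₁ᵀ) * Vᵀ) := by
    rw [hY, hSVD, hXdef]
    calc U * Sg * Vᵀ * Ω * (Ω₁pinv * (E₁ᵀ * Vᵀ))
        = U * Sg * ((Vᵀ * Ω) * Ω₁pinv * (E₁ᵀ * Vᵀ)) := by
          simp only [Matrix.mul_assoc]
      _ = U * (Sg * ((E₁ + E₂ * F) * E₁ᵀ) * Vᵀ) := by
          rw [hG]; simp only [Matrix.mul_assoc]
  have hkey : A - Y * X = U * (Sg * K * Vᵀ) := by
    rw [hYX, hSVD, hKdef]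
    simp only [Matrix.mul_sub, Matrix.sub_mul, Matrix.mul_one, Matrix.one_mul]
    simp only [Matrix.mul_assoc]
  -- K * Kᵀ computation
  set G : Matrix (Fin n) (Fin k) ℝ := E₁ + E₂ * F with hGdef
  have h1 : K * Kᵀ = 1 - E₁ * Gᵀ - G * E₁ᵀ + G * Gᵀ := by
    rw [hKdef, Matrix.transpose_sub, Matrix.transpose_one, Matrix.transpose_mul,
      Matrix.transpose_transpose]
    have expand : (1 - G * E₁ᵀ) * (1 - E₁ * Gᵀ)
        = 1 - E₁ * Gᵀ - G * E₁ᵀ + G * E₁ᵀ * (E₁ * Gᵀ) := by noncomm_ring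
    rw [expand, show G * E₁ᵀ * (E₁ * Gᵀ) = G * Gᵀ by
      rw [Matrix.mul_assoc, ← Matrix.mul_assoc E₁ᵀ, he11, Matrix.one_mul]]
  have h2 : G * Gᵀ = E₁ * E₁ᵀ + E₁ * (E₂ * F)ᵀ + (E₂ * F * E₁ᵀ + E₂ * F * (E₂ * F)ᵀ) := by
    rw [hGdef, Matrix.transpose_add, Matrix.add_mul, Matrix.mul_add, Matrix.mul_add]
  have h3 : E₁ * Gᵀ = E₁ * E₁ᵀ + E₁ * (E₂ * F)ᵀ := by
    rw [hGdef, Matrix.transpose_add, Matrix.mul_add]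
  have h4 : G * E₁ᵀ = E₁ * E₁ᵀ + E₂ * F * E₁ᵀ := by
    rw [hGdef, Matrix.add_mul]
  have hKKt : K * Kᵀ = 1 - E₁ * E₁ᵀ + E₂ * F * (E₂ * F)ᵀ := by
    rw [h1, h2, h3, h4]; abel
  -- the frobenius chain
  have step1 : frob ((1 - P) * A) ^ 2 ≤ frob (A - Y * X) ^ 2 := by
    rw [hPA]; exact frob_proj_le P hPsymm hPidem _
  have step2 : frob (A - Y * X) ^ 2 = frob (Sg * K) ^ 2 := by
    rw [hkey, frob_left_orth U hU,
      frob_right_orth Vᵀ (by rw [Matrix.transpose_transpose]; exact hV)]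
  have hSgt : Sgᵀ = Sg := by rw [hSgdef, Matrix.diagonal_transpose]
  have step3 : frob (Sg * K) ^ 2 = Matrix.trace (Sg * (K * Kᵀ) * Sg) := by
    rw [frob_sq_eq_trace, Matrix.transpose_mul, hSgt,
      show Sg * K * (Kᵀ * Sg) = Sg * (K * Kᵀ) * Sg by simp only [Matrix.mul_assoc]]
  -- diagonal commutation
  set D₁ : Matrix (Fin k) (Fin k) ℝ := Matrix.diagonal (fun a => σ (e₁ a)) with hD₁def
  have hS₂' : S₂ = Matrix.diagonal (fun b => σ (e₂ b)) := hS₂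
  have hS₂t : S₂ᵀ = S₂ := by rw [hS₂', Matrix.diagonal_transpose]
  have hD1 : Sg * E₁ = E₁ * D₁ := by
    ext i a
    rw [hSgdef, hD₁def, Matrix.diagonal_mul, Matrix.mul_diagonal]
    simp only [hE₁def]
    by_cases h : i = e₁ a
    · subst h; simp
    · simp [h]
  have hD2 : Sg * E₂ = E₂ * S₂ := by
    ext i b
    rw [hSgdef, hS₂', Matrix.diagonal_mul, Matrix.mul_diagonal]
    simp only [hE₂def]
    by_cases h : i = e₂ b
    · subst h; simp
    · simp [h]
  have hD1t : E₁ᵀ * Sg = D₁ * E₁ᵀ := by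
    have := congrArg Matrix.transpose hD1
    simp only [Matrix.transpose_mul, hSgt] at this
    rw [this, show D₁ᵀ = D₁ by rw [hD₁def, Matrix.diagonal_transpose]]
  have hD2t : E₂ᵀ * Sg = S₂ * E₂ᵀ := by
    have := congrArg Matrix.transpose hD2
    simp only [Matrix.transpose_mul, hSgt, hS₂t] at this
    rw [this]
  -- trace computations
  have trace_conj : ∀ {b : ℕ} (E : Matrix (Fin n) (Fin b) ℝ)
      (D : Matrix (Fin b) (Fin b) ℝ), Eᵀ * E = 1 →
      Matrix.trace (E * D * Eᵀ) = Matrix.trace D := by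
    intro b E D hE
    rw [Matrix.trace_mul_cycle, hE, Matrix.one_mul]
  have t2 : Matrix.trace (Sg * (E₁ * E₁ᵀ) * Sg) = ∑ a, σ (e₁ a) ^ 2 := by
    have e : Sg * (E₁ * E₁ᵀ) * Sg = E₁ * (D₁ * D₁) * E₁ᵀ := by
      calc Sg * (E₁ * E₁ᵀ) * Sg = Sg * E₁ * (E₁ᵀ * Sg) := by
            simp only [Matrix.mul_assoc]
        _ = E₁ * D₁ * (D₁ * E₁ᵀ) := by rw [hD1, hD1t]
        _ = E₁ * (D₁ * D₁) * E₁ᵀ := by simp only [Matrix.mul_assoc]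
    rw [e, trace_conj _ _ he11, hD₁def, Matrix.diagonal_mul_diagonal,
      Matrix.trace_diagonal]
    simp [sq]
  have t3 : Matrix.trace (Sg * (E₂ * F * (E₂ * F)ᵀ) * Sg)
      = frob (S₂ * Ω₂ * Ω₁pinv) ^ 2 := by
    have e : Sg * (E₂ * F * (E₂ * F)ᵀ) * Sg = E₂ * (S₂ * F * (S₂ * F)ᵀ) * E₂ᵀ := by
      calc Sg * (E₂ * F * (E₂ * F)ᵀ) * Sg
          = Sg * E₂ * (F * (Fᵀ * (E₂ᵀ * Sg))) := by
            simp only [Matrix.transpose_mul, Matrix.mul_assoc]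
        _ = E₂ * S₂ * (F * (Fᵀ * (S₂ * E₂ᵀ))) := by rw [hD2, hD2t]
        _ = E₂ * (S₂ * F * (S₂ * F)ᵀ) * E₂ᵀ := by
            simp only [Matrix.transpose_mul, hS₂t, Matrix.mul_assoc]
    rw [e, trace_conj _ _ he22, ← frob_sq_eq_trace, hFdef, ← Matrix.mul_assoc]
  have t1 : Matrix.trace (Sg * (1 : Matrix (Fin n) (Fin n) ℝ) * Sg)
      = ∑ i, σ i ^ 2 := by
    rw [Matrix.mul_one, hSgdef, Matrix.diagonal_mul_diagonal, Matrix.trace_diagonal]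
    simp [sq]
  have texpand : Matrix.trace (Sg * (K * Kᵀ) * Sg)
      = Matrix.trace (Sg * (1 : Matrix (Fin n) (Fin n) ℝ) * Sg)
        - Matrix.trace (Sg * (E₁ * E₁ᵀ) * Sg)
        + Matrix.trace (Sg * (E₂ * F * (E₂ * F)ᵀ) * Sg) := by
    rw [hKKt]
    simp only [Matrix.mul_add, Matrix.mul_sub, Matrix.add_mul, Matrix.sub_mul,
      Matrix.trace_add, Matrix.trace_sub]
  have hfrobS₂ : frob S₂ ^ 2 = ∑ b, σ (e₂ b) ^ 2 := by
    rw [frob_sq_eq_trace, hS₂t, hS₂', Matrix.diagonal_mul_diagonal,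
      Matrix.trace_diagonal]
    simp [sq]
  have hsum := hsplit (fun i => σ i ^ 2)
  rw [step2, step3, texpand, t1, t2, t3] at step1
  rw [hfrobS₂]
  linarith
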